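/- For all z, z' ∈ ℝ^d with |z| ≤ C: |∫_𝒜 r(a) (π_{z'}(a) − π_z(a)) da| ≤ 2R ((B/γ) · exp(3(BC + R)/γ) + 1/C) · |z' − z|. -/

import Mathlib

open MeasureTheory
open scoped RealInnerProductSpace

/-- The Gibbs probability density `π_z(a) ∝ exp((f(a)·z + r(a))/γ)` on the set `𝒜`. -/
noncomputable def gibbs {m d : ℕ} (𝒜 : Set (EuclideanSpace ℝ (Fin m))) (γ : ℝ)
    (f : EuclideanSpace ℝ (Fin m) → EuclideanSpace ℝ (Fin d))
    (r : EuclideanSpace ℝ (Fin m) → ℝ)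
    (z : EuclideanSpace ℝ (Fin d)) (a : EuclideanSpace ℝ (Fin m)) : ℝ :=
  Real.exp ((⟪f a, z⟫ + r a) / γ) /
    ∫ a' in 𝒜, Real.exp ((⟪f a', z⟫ + r a') / γ)

lemma exp_sub_exp_abs_le (x y : ℝ) :
    |Real.exp x - Real.exp y| ≤ |x - y| * Real.exp (max x y) := by
  wlog h : y ≤ x generalizing x y
  · rw [abs_sub_comm, abs_sub_comm x y, max_comm]
    exact this y x (le_of_not_ge h)
  rw [abs_of_nonneg (sub_nonneg.2 (Real.exp_le_exp.2 h)), abs_of_nonneg (sub_nonneg.2 h),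
    max_eq_left h]
  have h1 : Real.exp x - Real.exp y = Real.exp y * (Real.exp (x - y) - 1) := by
    rw [mul_sub, ← Real.exp_add]; ring_nf
  have h2 : Real.exp (x - y) - 1 ≤ (x - y) * Real.exp (x - y) := by
    have ha := Real.add_one_le_exp (-(x - y))
    have hb : Real.exp (-(x - y)) * Real.exp (x - y) = 1 := by
      rw [← Real.exp_add]; simp
    nlinarith [Real.exp_pos (x - y)]
  have h3 : Real.exp y * Real.exp (x - y) = Real.exp x := by
    rw [← Real.exp_add]; ring_nf
  calc Real.exp x - Real.exp y = Real.exp y * (Real.exp (x - y) - 1) := h1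
    _ ≤ Real.exp y * ((x - y) * Real.exp (x - y)) :=
        mul_le_mul_of_nonneg_left h2 (Real.exp_pos y).le
    _ = (x - y) * Real.exp x := by rw [← h3]; ring

lemma abs_integral_le {α : Type*} [MeasurableSpace α] (μ : Measure α) (f : α → ℝ) :
    |∫ x, f x ∂μ| ≤ ∫ x, |f x| ∂μ := by
  simpa [Real.norm_eq_abs] using norm_integral_le_integral_norm (μ := μ) f

set_option maxHeartbeats 1000000 in
theorem stmt3 {m d : ℕ}
    (𝒜 : Set (EuclideanSpace ℝ (Fin m)))
    (h𝒜 : IsCompact 𝒜) (h𝒜0 : 0 < volume 𝒜) (h𝒜fin : volume 𝒜 < ⊤)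
    (γ C B R : ℝ) (hγ : 0 < γ) (hC : 0 < C) (hB : 0 < B) (hR : 0 < R)
    (f : EuclideanSpace ℝ (Fin m) → EuclideanSpace ℝ (Fin d))
    (r : EuclideanSpace ℝ (Fin m) → ℝ)
    (hf : Measurable f) (hr : Measurable r)
    (hfB : ∀ a ∈ 𝒜, ‖f a‖ ≤ B) (hrR : ∀ a ∈ 𝒜, |r a| ≤ R)
    (z z' : EuclideanSpace ℝ (Fin d)) (hz : ‖z‖ ≤ C) :
    |∫ a in 𝒜, r a * (gibbs 𝒜 γ f r z' a - gibbs 𝒜 γ f r z a)| ≤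
      2 * R * (B / γ * Real.exp (3 * (B * C + R) / γ) + 1 / C) * ‖z' - z‖ := by
  have h𝒜meas : MeasurableSet 𝒜 := h𝒜.isClosed.measurableSet
  have key : ∀ w : EuclideanSpace ℝ (Fin d),
      IntegrableOn (fun a => Real.exp ((⟪f a, w⟫ + r a) / γ)) 𝒜 ∧
      IntegrableOn (fun a => r a * Real.exp ((⟪f a, w⟫ + r a) / γ)) 𝒜 ∧
      0 < ∫ a in 𝒜, Real.exp ((⟪f a, w⟫ + r a) / γ) ∧
      |∫ a in 𝒜, r a * Real.exp ((⟪f a, w⟫ + r a) / γ)| ≤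
        R * ∫ a in 𝒜, Real.exp ((⟪f a, w⟫ + r a) / γ) := by
    intro w
    have hmg : Measurable fun a => Real.exp ((⟪f a, w⟫ + r a) / γ) :=
      ((hf.inner_const.add hr).div_const γ).exp
    have hub : ∀ a ∈ 𝒜, Real.exp ((⟪f a, w⟫ + r a) / γ) ≤ Real.exp ((B * ‖w‖ + R) / γ) := by
      intro a ha
      apply Real.exp_le_exp.2
      apply div_le_div_of_nonneg_right ?_ hγ.le
      have h1 : |⟪f a, w⟫| ≤ B * ‖w‖ := by
        calc |⟪f a, w⟫| ≤ ‖f a‖ * ‖w‖ := abs_real_inner_le_norm _ _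
          _ ≤ B * ‖w‖ := mul_le_mul_of_nonneg_right (hfB a ha) (norm_nonneg _)
      have := abs_le.1 h1
      have := abs_le.1 (hrR a ha)
      linarith
    have hlb : ∀ a ∈ 𝒜, Real.exp (-((B * ‖w‖ + R) / γ)) ≤ Real.exp ((⟪f a, w⟫ + r a) / γ) := by
      intro a ha
      apply Real.exp_le_exp.2
      rw [neg_div']
      apply div_le_div_of_nonneg_right ?_ hγ.le
      have h1 : |⟪f a, w⟫| ≤ B * ‖w‖ := by
        calc |⟪f a, w⟫| ≤ ‖f a‖ * ‖w‖ := abs_real_inner_le_norm _ _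
          _ ≤ B * ‖w‖ := mul_le_mul_of_nonneg_right (hfB a ha) (norm_nonneg _)
      have := abs_le.1 h1
      have := abs_le.1 (hrR a ha)
      linarith
    have hZint : IntegrableOn (fun a => Real.exp ((⟪f a, w⟫ + r a) / γ)) 𝒜 := by
      apply Measure.integrableOn_of_bounded h𝒜fin.ne hmg.aestronglyMeasurable
        (M := Real.exp ((B * ‖w‖ + R) / γ))
      filter_upwards [ae_restrict_mem h𝒜meas] with a ha
      rw [Real.norm_eq_abs, abs_of_pos (Real.exp_pos _)]
      exact hub a ha
    have hIint : IntegrableOn (fun a => r a * Real.exp ((⟪f a, w⟫ + r a) / γ)) 𝒜 := by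
      apply Measure.integrableOn_of_bounded h𝒜fin.ne (hr.mul hmg).aestronglyMeasurable
        (M := R * Real.exp ((B * ‖w‖ + R) / γ))
      filter_upwards [ae_restrict_mem h𝒜meas] with a ha
      rw [Real.norm_eq_abs, Pi.mul_apply, abs_mul, abs_of_pos (Real.exp_pos _)]
      exact mul_le_mul (hrR a ha) (hub a ha) (Real.exp_pos _).le hR.le
    have hZpos : 0 < ∫ a in 𝒜, Real.exp ((⟪f a, w⟫ + r a) / γ) := by
      have := setIntegral_ge_of_const_le (c := Real.exp (-((B * ‖w‖ + R) / γ)))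
        h𝒜meas h𝒜fin.ne hlb hZint
      refine lt_of_lt_of_le ?_ this
      exact mul_pos (ENNReal.toReal_pos h𝒜0.ne' h𝒜fin.ne) (Real.exp_pos _)
    refine ⟨hZint, hIint, hZpos, ?_⟩
    calc |∫ a in 𝒜, r a * Real.exp ((⟪f a, w⟫ + r a) / γ)|
        ≤ ∫ a in 𝒜, |r a * Real.exp ((⟪f a, w⟫ + r a) / γ)| := abs_integral_le _ _
      _ ≤ ∫ a in 𝒜, R * Real.exp ((⟪f a, w⟫ + r a) / γ) := by
          apply setIntegral_mono_on hIint.abs (hZint.const_mul R) h𝒜meas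
          intro a ha
          rw [abs_mul, abs_of_pos (Real.exp_pos _)]
          exact mul_le_mul_of_nonneg_right (hrR a ha) (Real.exp_pos _).le
      _ = R * ∫ a in 𝒜, Real.exp ((⟪f a, w⟫ + r a) / γ) := integral_const_mul R _
  obtain ⟨hZint, hIint, hZpos, habsI⟩ := key z
  obtain ⟨hZ'int, hI'int, hZ'pos, habsI'⟩ := key z'
  set Z := ∫ a in 𝒜, Real.exp ((⟪f a, z⟫ + r a) / γ) with hZdef
  set Z' := ∫ a in 𝒜, Real.exp ((⟪f a, z'⟫ + r a) / γ) with hZ'def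
  set I := ∫ a in 𝒜, r a * Real.exp ((⟪f a, z⟫ + r a) / γ) with hIdef
  set I' := ∫ a in 𝒜, r a * Real.exp ((⟪f a, z'⟫ + r a) / γ) with hI'def
  have hLHS : (∫ a in 𝒜, r a * (gibbs 𝒜 γ f r z' a - gibbs 𝒜 γ f r z a)) = I' / Z' - I / Z := by
    have h1 : (fun a => r a * (gibbs 𝒜 γ f r z' a - gibbs 𝒜 γ f r z a))
        = fun a => (r a * Real.exp ((⟪f a, z'⟫ + r a) / γ)) / Z'
          - (r a * Real.exp ((⟪f a, z⟫ + r a) / γ)) / Z := by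
      funext a
      simp only [gibbs, ← hZdef, ← hZ'def]
      ring
    rw [h1, integral_sub (hI'int.div_const Z') (hIint.div_const Z), integral_div, integral_div]
  rw [hLHS]
  have hIZ : |I / Z| ≤ R := by
    rw [abs_div, abs_of_pos hZpos, div_le_iff₀ hZpos]
    exact habsI
  have hI'Z' : |I' / Z'| ≤ R := by
    rw [abs_div, abs_of_pos hZ'pos, div_le_iff₀ hZ'pos]
    exact habsI'
  have hEpos : 0 < B / γ * Real.exp (3 * (B * C + R) / γ) :=
    mul_pos (div_pos hB hγ) (Real.exp_pos _)
  have hd : (0:ℝ) ≤ ‖z' - z‖ := norm_nonneg _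
  rcases le_or_gt ‖z' - z‖ C with hcase | hcase
  · -- main case : ‖z' - z‖ ≤ C
    set D := ∫ a in 𝒜, |Real.exp ((⟪f a, z'⟫ + r a) / γ) - Real.exp ((⟪f a, z⟫ + r a) / γ)|
      with hDdef
    set K := B / γ * Real.exp (B * C / γ) * ‖z' - z‖ with hKdef
    have hKnn : 0 ≤ K := by positivity
    have hDle : D ≤ K * Z' := by
      rw [hDdef, hZ'def, ← integral_const_mul]
      apply setIntegral_mono_on (hZ'int.sub hZint).abs (hZ'int.const_mul K) h𝒜meas
      intro a ha
      set x := (⟪f a, z'⟫ + r a) / γ with hx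
      set y := (⟪f a, z⟫ + r a) / γ with hy
      have hxy : |x - y| ≤ B / γ * ‖z' - z‖ := by
        have hxyeq : x - y = ⟪f a, z' - z⟫ / γ := by rw [hx, hy, inner_sub_right]; ring
        rw [hxyeq, abs_div, abs_of_pos hγ, div_le_iff₀ hγ]
        calc |⟪f a, z' - z⟫| ≤ ‖f a‖ * ‖z' - z‖ := abs_real_inner_le_norm _ _
          _ ≤ B * ‖z' - z‖ := mul_le_mul_of_nonneg_right (hfB a ha) hd
          _ = B / γ * ‖z' - z‖ * γ := by field_simp
      have hmax : max x y ≤ x + B * C / γ := by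
        rcases max_cases x y with ⟨h, _⟩ | ⟨h, _⟩
        · rw [h]; linarith [div_pos (mul_pos hB hC) hγ]
        · rw [h]
          have h1 : y - x ≤ B / γ * ‖z' - z‖ :=
            (le_abs_self _).trans (by rwa [abs_sub_comm] at hxy)
          have h2 : B / γ * ‖z' - z‖ ≤ B * C / γ := by
            rw [div_mul_eq_mul_div]
            apply div_le_div_of_nonneg_right ?_ hγ.le
            exact mul_le_mul_of_nonneg_left hcase hB.le
          linarith
      calc |Real.exp x - Real.exp y| ≤ |x - y| * Real.exp (max x y) := exp_sub_exp_abs_le x y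
        _ ≤ (B / γ * ‖z' - z‖) * Real.exp (x + B * C / γ) := by
            apply mul_le_mul hxy (Real.exp_le_exp.2 hmax) (Real.exp_pos _).le
            positivity
        _ = K * Real.exp x := by rw [Real.exp_add, hKdef]; ring
    have hI'I : |I' - I| ≤ R * D := by
      have heq : I' - I = ∫ a in 𝒜, (r a * Real.exp ((⟪f a, z'⟫ + r a) / γ)
          - r a * Real.exp ((⟪f a, z⟫ + r a) / γ)) := (integral_sub hI'int hIint).symm
      rw [heq, hDdef, ← integral_const_mul]
      calc |∫ a in 𝒜, (r a * Real.exp ((⟪f a, z'⟫ + r a) / γ)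
            - r a * Real.exp ((⟪f a, z⟫ + r a) / γ))|
          ≤ ∫ a in 𝒜, |r a * Real.exp ((⟪f a, z'⟫ + r a) / γ)
            - r a * Real.exp ((⟪f a, z⟫ + r a) / γ)| := abs_integral_le _ _
        _ ≤ ∫ a in 𝒜, R * |Real.exp ((⟪f a, z'⟫ + r a) / γ)
            - Real.exp ((⟪f a, z⟫ + r a) / γ)| := by
            apply setIntegral_mono_on (hI'int.sub hIint).abs
              ((hZ'int.sub hZint).abs.const_mul R) h𝒜meas
            intro a ha
            simp only [Pi.sub_apply]
            have e : r a * Real.exp ((⟪f a, z'⟫ + r a) / γ)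
                - r a * Real.exp ((⟪f a, z⟫ + r a) / γ)
                = r a * (Real.exp ((⟪f a, z'⟫ + r a) / γ)
                  - Real.exp ((⟪f a, z⟫ + r a) / γ)) := by ring
            rw [e, abs_mul]
            exact mul_le_mul_of_nonneg_right (hrR a ha) (abs_nonneg _)
    have hZZ' : |Z - Z'| ≤ D := by
      have heq : Z - Z' = ∫ a in 𝒜, (Real.exp ((⟪f a, z⟫ + r a) / γ)
          - Real.exp ((⟪f a, z'⟫ + r a) / γ)) := (integral_sub hZint hZ'int).symm
      rw [heq, hDdef]
      calc |∫ a in 𝒜, (Real.exp ((⟪f a, z⟫ + r a) / γ) - Real.exp ((⟪f a, z'⟫ + r a) / γ))|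
          ≤ ∫ a in 𝒜, |Real.exp ((⟪f a, z⟫ + r a) / γ) - Real.exp ((⟪f a, z'⟫ + r a) / γ)| :=
            abs_integral_le _ _
        _ = ∫ a in 𝒜, |Real.exp ((⟪f a, z'⟫ + r a) / γ) - Real.exp ((⟪f a, z⟫ + r a) / γ)| := by
            congr 1; funext a; rw [abs_sub_comm]
    have hZne : Z ≠ 0 := hZpos.ne'
    have hZ'ne : Z' ≠ 0 := hZ'pos.ne'
    have hkey_eq : I' / Z' - I / Z = (I' - I) / Z' + (I / Z) * ((Z - Z') / Z') := by
      field_simp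
      ring
    have hDZ' : D / Z' ≤ K := by
      rw [div_le_iff₀ hZ'pos]; exact hDle
    have hDnn : 0 ≤ D := by
      rw [hDdef]
      exact setIntegral_nonneg h𝒜meas fun a _ => abs_nonneg _
    have hmain : |I' / Z' - I / Z| ≤ 2 * R * K := by
      rw [hkey_eq]
      have t1 : |(I' - I) / Z'| ≤ R * (D / Z') := by
        rw [abs_div, abs_of_pos hZ'pos, ← mul_div_assoc]
        exact div_le_div_of_nonneg_right hI'I hZ'pos.le
      have t2 : |(I / Z) * ((Z - Z') / Z')| ≤ R * (D / Z') := by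
        rw [abs_mul, abs_div (Z - Z') Z', abs_of_pos hZ'pos]
        apply mul_le_mul hIZ (div_le_div_of_nonneg_right hZZ' hZ'pos.le) (by positivity) hR.le
      calc |(I' - I) / Z' + (I / Z) * ((Z - Z') / Z')|
          ≤ |(I' - I) / Z'| + |(I / Z) * ((Z - Z') / Z')| := abs_add_le _ _
        _ ≤ R * (D / Z') + R * (D / Z') := add_le_add t1 t2
        _ = 2 * R * (D / Z') := by ring
        _ ≤ 2 * R * K := mul_le_mul_of_nonneg_left hDZ' (by linarith)
    refine hmain.trans ?_
    rw [hKdef]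
    have hexp : Real.exp (B * C / γ) ≤ Real.exp (3 * (B * C + R) / γ) := by
      apply Real.exp_le_exp.2
      apply div_le_div_of_nonneg_right ?_ hγ.le
      linarith [mul_pos hB hC, hR.le]
    have step1 : 2 * R * (B / γ * Real.exp (B * C / γ) * ‖z' - z‖)
        ≤ 2 * R * (B / γ * Real.exp (3 * (B * C + R) / γ) * ‖z' - z‖) := by
      apply mul_le_mul_of_nonneg_left ?_ (by linarith)
      apply mul_le_mul_of_nonneg_right ?_ hd
      exact mul_le_mul_of_nonneg_left hexp (by positivity)
    refine step1.trans ?_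
    have step2 : B / γ * Real.exp (3 * (B * C + R) / γ) * ‖z' - z‖
        ≤ (B / γ * Real.exp (3 * (B * C + R) / γ) + 1 / C) * ‖z' - z‖ := by
      apply mul_le_mul_of_nonneg_right ?_ hd
      linarith [one_div_pos.2 hC]
    calc 2 * R * (B / γ * Real.exp (3 * (B * C + R) / γ) * ‖z' - z‖)
        ≤ 2 * R * ((B / γ * Real.exp (3 * (B * C + R) / γ) + 1 / C) * ‖z' - z‖) :=
          mul_le_mul_of_nonneg_left step2 (by linarith)
      _ = 2 * R * (B / γ * Real.exp (3 * (B * C + R) / γ) + 1 / C) * ‖z' - z‖ := by ring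
  · -- trivial case : C < ‖z' - z‖
    have h1 : |I' / Z' - I / Z| ≤ 2 * R := by
      calc |I' / Z' - I / Z| ≤ |I' / Z'| + |I / Z| := by
            have := abs_add_le (I' / Z') (-(I / Z))
            simpa [sub_eq_add_neg] using this
        _ ≤ R + R := add_le_add hI'Z' hIZ
        _ = 2 * R := by ring
    refine h1.trans ?_
    have h4 : 1 ≤ ‖z' - z‖ * (1 / C) := by
      rw [mul_one_div]; exact (one_le_div hC).2 hcase.le
    have h3 : 2 * R ≤ 2 * R * (1 / C) * ‖z' - z‖ := by
      nlinarith [mul_le_mul_of_nonneg_left h4 (by linarith : (0:ℝ) ≤ 2 * R)]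
    refine h3.trans ?_
    nlinarith [mul_nonneg (mul_nonneg (by linarith : (0:ℝ) ≤ 2 * R) hEpos.le) hd]
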